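/- Let k be a field of characteristic different from 2 and b ∈ k*. There exists a function R: (C₂×C₂)×(C₂×C₂) → k* such that (g_b, R) is an abelian 3-cocycle on C₂×C₂ with coefficients in k* if and only if g_b is a 3-coboundary (equivalently, if and only if b has a square root in k*). -/

import Mathlib

def IsCocycle {k : Type*} [Field k] {G : Type*} [Group G] (φ : G → G → G → kˣ) : Prop :=
  ∀ x y z t : G, φ y z t * φ x (y * z) t * φ x y z = φ (x * y) z t * φ x y (z * t)

def IsNormalized {k : Type*} [Field k] {G : Type*} [Group G] (φ : G → G → G → kˣ) : Prop :=
  ∀ x z : G, φ x 1 z = 1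

def d2 {k : Type*} [Field k] {G : Type*} [Group G] (g : G → G → kˣ) : G → G → G → kˣ :=
  fun x y z => g y z * (g (x * y) z)⁻¹ * g x (y * z) * (g x y)⁻¹

def IsCoboundary {k : Type*} [Field k] {G : Type*} [Group G] (φ : G → G → G → kˣ) : Prop :=
  ∃ g : G → G → kˣ, φ = d2 g

/-- The Klein four-group `C₂ × C₂`, written multiplicatively. -/
abbrev K : Type := Multiplicative (ZMod 2 × ZMod 2)

def σ : K := Multiplicative.ofAdd (1, 0)
def τ : K := Multiplicative.ofAdd (0, 1)
def ρ : K := Multiplicative.ofAdd (1, 1)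

/-- The happy normalized 3-cocycle `h_a` on the Klein group. -/
def hA {k : Type*} [Field k] (a : kˣ) : K → K → K → kˣ := fun x y z =>
  if x ≠ 1 ∧ y = z ∧ y ≠ 1 ∧ x ≠ y then a
  else if x = y ∧ x ≠ 1 ∧ z ≠ 1 ∧ y ≠ z then a⁻¹
  else 1

/-- The happy normalized 3-cocycle `g_b` on the Klein group. -/
def gB {k : Type*} [Field k] (b : kˣ) : K → K → K → kˣ := fun x y z =>
  if (x, y, z) = (σ, τ, σ) ∨ (x, y, z) = (ρ, σ, ρ) ∨ (x, y, z) = (τ, ρ, τ) then b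
  else if (x, y, z) = (τ, σ, τ) ∨ (x, y, z) = (σ, ρ, σ) ∨ (x, y, z) = (ρ, τ, ρ) then b⁻¹
  else 1

/-- An abelian 3-cocycle on an abelian group `G` with coefficients in `kˣ` :
a normalized 3-cocycle `φ` together with an R-matrix `R`. -/
def IsAbelianCocycle {k : Type*} [Field k] {G : Type*} [CommGroup G]
    (φ : G → G → G → kˣ) (R : G → G → kˣ) : Prop :=
  IsCocycle φ ∧ IsNormalized φ ∧
  (∀ x y z : G, R (x * y) z * φ x z y = φ x y z * R x z * φ z x y * R y z) ∧
  (∀ x y z : G, φ x y z * R x (y * z) * φ y z x = R x y * φ y x z * R x z)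

/-- integer exponent pattern of `gB`. -/
def e3 : K → K → K → ℤ := fun x y z =>
  if (x, y, z) = (σ, τ, σ) ∨ (x, y, z) = (ρ, σ, ρ) ∨ (x, y, z) = (τ, ρ, τ) then 1
  else if (x, y, z) = (τ, σ, τ) ∨ (x, y, z) = (σ, ρ, σ) ∨ (x, y, z) = (ρ, τ, ρ) then -1
  else 0

lemma gB_eq {k : Type*} [Field k] (b : kˣ) (x y z : K) : gB b x y z = b ^ e3 x y z := by
  unfold gB e3; split_ifs <;> simp

/-- exponents of the coboundary witness. -/
def u2 : K → K → ℤ := fun x y =>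
  if (x, y) = (σ, σ) ∨ (x, y) = (σ, ρ) ∨ (x, y) = (τ, σ) then 1
  else if (x, y) = (τ, ρ) then -1 else 0

/-- exponents of the R-matrix witness. -/
def r2 : K → K → ℤ := fun x y =>
  if (x, y) = (σ, τ) ∨ (x, y) = (τ, ρ) ∨ (x, y) = (ρ, σ) then 1
  else if (x, y) = (σ, ρ) ∨ (x, y) = (τ, σ) ∨ (x, y) = (ρ, τ) then -1 else 0

lemma e3_cocycle : ∀ x y z t : K,
    e3 y z t + e3 x (y * z) t + e3 x y z = e3 (x * y) z t + e3 x y (z * t) := by decide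

lemma e3_norm : ∀ x z : K, e3 x 1 z = 0 := by decide

lemma u2_cob : ∀ x y z : K,
    2 * e3 x y z = u2 y z + -u2 (x * y) z + u2 x (y * z) + -u2 x y := by decide

lemma r2_hex1 : ∀ x y z : K,
    r2 (x * y) z + 2 * e3 x z y = 2 * e3 x y z + r2 x z + 2 * e3 z x y + r2 y z := by decide

lemma r2_hex2 : ∀ x y z : K,
    2 * e3 x y z + r2 x (y * z) + 2 * e3 y z x = r2 x y + 2 * e3 y x z + r2 x z := by decide

lemma sq_to_R {k : Type*} [Field k] (b : kˣ) (h : ∃ d : kˣ, d ^ 2 = b) :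
    ∃ R : K → K → kˣ, IsAbelianCocycle (gB b) R := by
  obtain ⟨d, hd⟩ := h
  have hd2 : d ^ (2 : ℤ) = b := by rw [← hd]; exact zpow_ofNat d 2
  have hzp2 : ∀ x y z : K, gB b x y z = d ^ (2 * e3 x y z) := by
    intro x y z; rw [gB_eq, ← hd2, ← zpow_mul]
  refine ⟨fun x y => d ^ r2 x y, ?_, ?_, ?_, ?_⟩
  · intro x y z t
    simp only [gB_eq, ← zpow_add]
    rw [e3_cocycle]
  · intro x z
    rw [gB_eq, e3_norm, zpow_zero]
  · intro x y z
    simp only [hzp2, ← zpow_add]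
    rw [r2_hex1]
  · intro x y z
    simp only [hzp2, ← zpow_add]
    rw [r2_hex2]

lemma sq_to_cob {k : Type*} [Field k] (b : kˣ) (h : ∃ d : kˣ, d ^ 2 = b) :
    IsCoboundary (gB b) := by
  obtain ⟨d, hd⟩ := h
  have hd2 : d ^ (2 : ℤ) = b := by rw [← hd]; exact zpow_ofNat d 2
  refine ⟨fun x y => d ^ u2 x y, ?_⟩
  funext x y z
  show gB b x y z = _
  rw [gB_eq, ← hd2, ← zpow_mul]
  simp only [d2, ← zpow_neg, ← zpow_add]
  rw [u2_cob]

lemma R_to_sq {k : Type*} [Field k] (b : kˣ)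
    (h : ∃ R : K → K → kˣ, IsAbelianCocycle (gB b) R) : ∃ d : kˣ, d ^ 2 = b := by
  obtain ⟨R, _, _, hH1, _⟩ := h
  have h1 := hH1 1 1 τ
  have h2 := hH1 σ σ τ
  have hσσ : σ * σ = (1 : K) := by decide
  rw [one_mul] at h1
  rw [hσσ] at h2
  simp only [gB_eq, show e3 (1:K) τ 1 = 0 from by decide,
    show e3 (1:K) 1 τ = 0 from by decide, show e3 τ (1:K) 1 = 0 from by decide,
    show e3 σ τ σ = 1 from by decide, show e3 σ σ τ = 0 from by decide,
    show e3 τ σ σ = 0 from by decide, zpow_zero, zpow_one, one_mul, mul_one] at h1 h2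
  -- h1 : R 1 τ = R 1 τ * R 1 τ, h2 : R 1 τ * b = R σ τ * R σ τ
  have hR1 : R 1 τ = 1 := left_eq_mul.mp h1
  rw [hR1, one_mul] at h2
  exact ⟨R σ τ, by rw [pow_two]; exact h2.symm⟩

lemma cob_to_sq {k : Type*} [Field k] (b : kˣ) (h : IsCoboundary (gB b)) :
    ∃ d : kˣ, d ^ 2 = b := by
  obtain ⟨g, hg⟩ := h
  have hσσ : σ * σ = (1 : K) := by decide
  have hστ : σ * τ = ρ := by decide
  have hτσ : τ * σ = ρ := by decide
  have key : gB b 1 1 τ * gB b σ σ τ * gB b σ τ σ * gB b τ 1 1 * gB b τ σ σ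
      = (g σ ρ * (g ρ σ)⁻¹) ^ 2 := by
    rw [hg]
    simp only [d2, one_mul, mul_one, hσσ, hστ, hτσ]
    rw [Units.ext_iff]
    push_cast
    field_simp
  have hb : b = (g σ ρ * (g ρ σ)⁻¹) ^ 2 := by
    rw [← key]
    simp only [gB_eq, show e3 (1:K) 1 τ = 0 from by decide,
      show e3 σ σ τ = 0 from by decide, show e3 σ τ σ = 1 from by decide,
      show e3 τ (1:K) 1 = 0 from by decide, show e3 τ σ σ = 0 from by decide,
      zpow_zero, zpow_one, one_mul, mul_one]
  exact ⟨_, hb.symm⟩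

theorem statement15 {k : Type*} [Field k] (hk : ringChar k ≠ 2) (b : kˣ) :
    ((∃ R : K → K → kˣ, IsAbelianCocycle (gB b) R) ↔ IsCoboundary (gB b)) ∧
    (IsCoboundary (gB b) ↔ ∃ d : kˣ, d ^ 2 = b) := by
  refine ⟨⟨fun h => sq_to_cob b (R_to_sq b h), fun h => sq_to_R b (cob_to_sq b h)⟩,
    ⟨cob_to_sq b, sq_to_cob b⟩⟩
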